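/- Let a,m,b>0 with a/m > 4b + 1/b. Then a/m > 2(b + √(1+b²)), so V₂ := (a/m + √((a/m)² − 4(1 + ab/m)))/(2(1 + ab/m)) and U₂ := m(a/m − V₂/(1 − bV₂)) are well defined; moreover U₂ > 4bm and V₂ = v_+(U₂) := (1 + √(1 − 4bm/U₂))/(2b) (i.e., the vegetated equilibrium lies on the upper branch of the critical manifold). If in addition a/m < 9b/2 + 2/b, then U₂ < 9bm/2. -/

import Mathlib

open Real Set

set_option maxHeartbeats 1000000 in
lemma vsub_aux (s b m : ℝ) (hb : 0 < b) (hm : 0 < m) (h1 : 4*b + 1/b < s) :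
    let V := (s + Real.sqrt (s^2 - 4*(1 + s*b))) / (2*(1 + s*b))
    let U := m * (s - V / (1 - b*V))
    4*b*m < U ∧ V = (1 + Real.sqrt (1 - 4*b*m/U)) / (2*b) ∧
      (s < 9*b/2 + 2/b → U < 9*b*m/2) := by
  intro V U
  have hUdef0 : U = m * (s - V / (1 - b*V)) := rfl
  have hVdef : V = (s + Real.sqrt (s^2 - 4*(1 + s*b))) / (2*(1 + s*b)) := rfl
  clear_value V U
  have hb' : (0:ℝ) < 1/b := by positivity
  have hs0 : 0 < s := by linarith
  have hbs : 0 < 1 + s*b := by positivity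
  have h1' : 4*b^2 + 1 < s*b := by
    nlinarith [mul_lt_mul_of_pos_right h1 hb, one_div_mul_cancel hb.ne']
  set r := Real.sqrt (s^2 - 4*(1 + s*b)) with hrdef
  have hD0 : (0:ℝ) ≤ s^2 - 4*(1 + s*b) := by nlinarith [sq_nonneg b, mul_pos hs0 hb]
  have hr0 : 0 ≤ r := Real.sqrt_nonneg _
  have hr : r^2 = s^2 - 4*(1 + s*b) := Real.sq_sqrt hD0
  have hbrsq : (b*r)^2 = b^2*s^2 - 4*b^2 - 4*s*b^3 := by
    rw [mul_pow, hr]; ring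
  have hbr0 : 0 ≤ b*r := mul_nonneg hb.le hr0
  have hx1 : 0 < s*b + 1 := by positivity
  have hbr : 1 < b*r := by
    nlinarith [hbrsq, mul_pos (show (0:ℝ) < s*b - 4*b^2 - 1 by linarith) hx1]
  have hbru : b*r < s*b + 2 := by
    nlinarith [hbrsq, mul_pos hs0 hb, sq_nonneg b,
      mul_nonneg (sq_nonneg b) (mul_pos hs0 hb).le]

  have hden2 : (2*(1 + s*b)) ≠ 0 := by positivity
  have hVquad : (1 + s*b)*V^2 - s*V + 1 = 0 := by
    rw [hVdef]; field_simp; nlinarith [hr]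
  have hVlb : 1/(2*b) < V := by
    rw [hVdef, div_lt_div_iff₀ (by positivity) (by positivity)]
    nlinarith [hbr]
  have hVub : V < 1/b := by
    rw [hVdef, div_lt_div_iff₀ (by positivity) (by positivity)]
    nlinarith [hbru]
  have hVpos : 0 < V := lt_trans (by positivity) hVlb
  clear_value r
  have hden : 0 < 1 - b*V := by
    have := (lt_div_iff₀ hb).mp hVub
    linarith
  have h2bV : 0 < 2*b*V - 1 := by
    have := (div_lt_iff₀ (by positivity : (0:ℝ) < 2*b)).mp hVlb
    linarith
  have hkey : s - V/(1 - b*V) = 1/(V*(1 - b*V)) := by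
    rw [sub_eq_iff_eq_add, div_add_div _ _ (mul_pos hVpos hden).ne' hden.ne',
      eq_div_iff (mul_ne_zero (mul_pos hVpos hden).ne' hden.ne')]
    linear_combination (b*V - 1) * hVquad
  have hUdef : U = m / (V*(1 - b*V)) := by
    rw [hUdef0, hkey, mul_one_div]
  have hVden : 0 < V*(1 - b*V) := mul_pos hVpos hden
  have hU4 : 4*b*m < U := by
    rw [hUdef, lt_div_iff₀ hVden]
    nlinarith [mul_pos hm (mul_pos h2bV h2bV)]
  refine ⟨hU4, ?_, ?_⟩
  · have hfrac : 1 - 4*b*m/U = (2*b*V - 1)^2 := by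
      rw [hUdef]
      field_simp
      ring
    rw [hfrac, Real.sqrt_sq h2bV.le]
    field_simp
    ring
  · intro hs2
    have h2' : s*b < 9*b^2/2 + 2 := by
      have e : (9*b/2 + 2/b)*b = 9*b^2/2 + 2 := by field_simp
      have h := mul_lt_mul_of_pos_right hs2 hb
      rw [e] at h; exact h
    have hbru2 : 3*(b*r) < s*b + 4 := by
      nlinarith [hbrsq, mul_pos (show (0:ℝ) < 9*b^2/2 + 2 - s*b by linarith) hx1, hbr0]
    have hVub2 : V < 2/(3*b) := by
      rw [hVdef, div_lt_div_iff₀ (by positivity) (by positivity)]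
      nlinarith [hbru2]
    have h3bV : 3*b*V < 2 := by
      have := (lt_div_iff₀ (by positivity : (0:ℝ) < 3*b)).mp hVub2
      nlinarith
    rw [hUdef, div_lt_iff₀ hVden]
    nlinarith [mul_pos hm (mul_pos (show (0:ℝ) < 3*b*V - 1 by linarith)
      (show (0:ℝ) < 2 - 3*b*V by linarith))]

theorem vegetated_state_upper_branch
    (a m b : ℝ) (ha : 0 < a) (hm : 0 < m) (hb : 0 < b)
    (h1 : 4*b + 1/b < a/m) :
    2*(b + Real.sqrt (1 + b^2)) < a/m ∧
    (let V₂ := (a/m + Real.sqrt ((a/m)^2 - 4*(1 + a*b/m))) / (2*(1 + a*b/m))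
     let U₂ := m * (a/m - V₂ / (1 - b*V₂))
     4*b*m < U₂ ∧
     V₂ = (1 + Real.sqrt (1 - 4*b*m/U₂)) / (2*b) ∧
     (a/m < 9*b/2 + 2/b → U₂ < 9*b*m/2)) := by
  have habm : a*b/m = a/m*b := mul_div_right_comm a b m
  constructor
  · have hsqle : Real.sqrt (1+b^2) ≤ b + 1/(2*b) := by
      rw [← Real.sqrt_sq (show (0:ℝ) ≤ b + 1/(2*b) by positivity)]
      apply Real.sqrt_le_sqrt
      have h : (b + 1/(2*b))^2 = b^2 + 1/4*(1/b)^2 + 1 := by field_simp; ring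
      nlinarith [sq_nonneg (1/b)]
    have h2 : 2*(1/(2*b)) = 1/b := by field_simp
    linarith
  · rw [habm]
    exact vsub_aux (a/m) b m hb hm h1
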